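/- Let $V$ be a real vector space, let $w \in \mathbb{R}$ with $w \neq 1$, and let $\alpha_{t-1}, \alpha_t \in (0,1)$ with $\alpha_{t-1} \neq \alpha_t$. Let $z^*_{t-1}, \epsilon_C', \epsilon_C, \epsilon_\varnothing \in V$. Define the DDIM-inversion step $z^*_t := \sqrt{\alpha_t/\alpha_{t-1}}\, z^*_{t-1} + \sqrt{\alpha_t}\left(\sqrt{1/\alpha_t - 1} - \sqrt{1/\alpha_{t-1} - 1}\right) \epsilon_C'$, set $\bar{z}_t := z^*_t$, define the classifier-free-guidance prediction $\tilde{\epsilon} := \epsilon_\varnothing + w(\epsilon_C - \epsilon_\varnothing)$, and define the DDIM-sampling step $\bar{z}_{t-1} := \sqrt{\alpha_{t-1}/\alpha_t}\, \bar{z}_t + \sqrt{\alpha_{t-1}}\left(\sqrt{1/\alpha_{t-1} - 1} - \sqrt{1/\alpha_t - 1}\right) \tilde{\epsilon}$. Assume the noise-consistency condition $\epsilon_C' = \epsilon_C$. Then $\bar{z}_{t-1} = z^*_{t-1}$ if and only if $\epsilon_\varnothing = \epsilon_C$. -/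

import Mathlib

/-- Proposition 2 (optimality of negative-prompt inversion): with the DDIM inversion step
producing `z*_t` from `z*_{t-1}` with noise `εC'`, setting `z̄_t = z*_t`, and the CFG-combined
DDIM sampling step producing `z̄_{t-1}`, under the noise-consistency assumption `εC' = εC`,
one has `z̄_{t-1} = z*_{t-1}` iff `εnull = εC`. -/
theorem negative_prompt_inversion_optimality
    {V : Type*} [AddCommGroup V] [Module ℝ V]
    (w : ℝ) (hw : w ≠ 1)
    (αtm1 αt : ℝ) (hαtm1 : αtm1 ∈ Set.Ioo (0 : ℝ) 1) (hαt : αt ∈ Set.Ioo (0 : ℝ) 1)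
    (hne : αtm1 ≠ αt)
    (zstm1 εC' εC εnull : V)
    (zst zbart εtilde zbartm1 : V)
    (hzst : zst = Real.sqrt (αt / αtm1) • zstm1 +
      (Real.sqrt αt * (Real.sqrt (1 / αt - 1) - Real.sqrt (1 / αtm1 - 1))) • εC')
    (hzbart : zbart = zst)
    (hεtilde : εtilde = εnull + w • (εC - εnull))
    (hzbartm1 : zbartm1 = Real.sqrt (αtm1 / αt) • zbart +
      (Real.sqrt αtm1 * (Real.sqrt (1 / αtm1 - 1) - Real.sqrt (1 / αt - 1))) • εtilde)
    (hnoise : εC' = εC) :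
    zbartm1 = zstm1 ↔ εnull = εC := by
  obtain ⟨ha0, ha1⟩ := hαtm1
  obtain ⟨hb0, hb1⟩ := hαt
  have hsa : Real.sqrt αtm1 ≠ 0 := by positivity
  have hsb : Real.sqrt αt ≠ 0 := by positivity
  have hA : (0:ℝ) ≤ 1 / αtm1 - 1 := by
    rw [sub_nonneg, le_div_iff₀ ha0]; linarith
  have hB : (0:ℝ) ≤ 1 / αt - 1 := by
    rw [sub_nonneg, le_div_iff₀ hb0]; linarith
  have hXY : Real.sqrt (1/αtm1 - 1) - Real.sqrt (1/αt - 1) ≠ 0 := by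
    rw [sub_ne_zero]
    intro h
    have h1 : 1/αtm1 - 1 = 1/αt - 1 := (Real.sqrt_inj hA hB).mp h
    have : 1/αtm1 = 1/αt := by linarith
    exact hne (by field_simp at this; linarith)
  subst hnoise hzst hzbart hεtilde hzbartm1
  have key : (Real.sqrt (αtm1 / αt) • (Real.sqrt (αt / αtm1) • zstm1 +
      (Real.sqrt αt * (Real.sqrt (1 / αt - 1) - Real.sqrt (1 / αtm1 - 1))) • εC') +
      (Real.sqrt αtm1 * (Real.sqrt (1 / αtm1 - 1) - Real.sqrt (1 / αt - 1))) •
        (εnull + w • (εC' - εnull))) - zstm1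
      = ((1 - w) * (Real.sqrt αtm1 * (Real.sqrt (1/αtm1 - 1) - Real.sqrt (1/αt - 1))))
          • (εnull - εC') := by
    rw [Real.sqrt_div ha0.le, Real.sqrt_div hb0.le]
    match_scalars
    · field_simp; ring
    · field_simp; ring
    · field_simp; ring
  have hc : ((1 - w) * (Real.sqrt αtm1 * (Real.sqrt (1/αtm1 - 1) - Real.sqrt (1/αt - 1)))) ≠ 0 := by
    exact mul_ne_zero (sub_ne_zero.mpr fun h => hw (by linarith)) (mul_ne_zero hsa hXY)
  constructor
  · intro h
    rw [h, sub_self] at key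
    rcases smul_eq_zero.mp key.symm with h' | h'
    · exact absurd h' hc
    · exact sub_eq_zero.mp h'
  · intro h
    rw [← sub_eq_zero, key, h, sub_self, smul_zero]
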